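/- Let L > 0 and f : [0,L] → ℝ be twice continuously differentiable. Then ∫₀ᴸ |f'(x)|² dx ≤ (162/L²)·∫₀ᴸ |f(t)|² dt + 2L²·∫₀ᴸ |f''(t)|² dt. -/

import Mathlib

open intervalIntegral MeasureTheory

lemma cs_int (u v : ℝ → ℝ) (hu : Continuous u) (hv : Continuous v) (a b : ℝ) (hab : a ≤ b) :
    (∫ s in a..b, u s * v s) ^ 2 ≤ (∫ s in a..b, u s ^ 2) * (∫ s in a..b, v s ^ 2) := by
  set A := ∫ s in a..b, v s ^ 2 with hA
  set B := ∫ s in a..b, u s * v s with hB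
  set C := ∫ s in a..b, u s ^ 2 with hC
  have key : ∀ l : ℝ, 0 ≤ A * (l * l) + (-2 * B) * l + C := by
    intro l
    have h0 : 0 ≤ ∫ s in a..b, (u s - l * v s) ^ 2 :=
      intervalIntegral.integral_nonneg hab (fun s _ => sq_nonneg _)
    have h1 : (∫ s in a..b, (u s - l * v s) ^ 2)
        = C - (2*l) * B + l^2 * A := by
      have e : ∀ s, (u s - l * v s)^2
          = u s^2 - (2*l)*(u s * v s) + l^2 * v s^2 := by intro s; ring
      simp_rw [e]
      rw [intervalIntegral.integral_add, intervalIntegral.integral_sub,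
        intervalIntegral.integral_const_mul, intervalIntegral.integral_const_mul]
      · exact (hu.pow 2).intervalIntegrable a b
      · exact (continuous_const.mul (hu.mul hv)).intervalIntegrable a b
      · exact ((hu.pow 2).sub (continuous_const.mul (hu.mul hv))).intervalIntegrable a b
      · exact (continuous_const.mul (hv.pow 2)).intervalIntegrable a b
    nlinarith [h0, h1]
  have hd := discrim_le_zero key
  rw [discrim] at hd
  nlinarith [hd]

lemma sq_integral_le (f : ℝ → ℝ) (hfc : Continuous f) (L a b : ℝ)
    (h0 : 0 ≤ a) (hab : a ≤ b) (hbL : b ≤ L) :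
    (∫ t in a..b, f t) ^ 2 ≤ (b - a) * ∫ t in (0:ℝ)..L, f t ^ 2 := by
  have h1 := cs_int (fun _ => 1) f continuous_const hfc a b hab
  simp only [one_mul, one_pow, intervalIntegral.integral_const, smul_eq_mul, mul_one] at h1
  refine h1.trans ?_
  apply mul_le_mul_of_nonneg_left _ (by linarith)
  exact intervalIntegral.integral_mono_interval h0 hab hbL
    (Filter.Eventually.of_forall (fun s => sq_nonneg _))
    ((hfc.pow 2).intervalIntegrable 0 L)

lemma taylor_id (f : ℝ → ℝ) (hd1 : ∀ s, HasDerivAt f (deriv f s) s)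
    (hd2 : ∀ s, HasDerivAt (deriv f) (deriv (deriv f) s) s)
    (hcont : Continuous (deriv (deriv f))) (x t : ℝ) :
    (∫ s in x..t, (t - s) * deriv (deriv f) s) = f t - f x - (t - x) * deriv f x := by
  have hF : ∀ s : ℝ, HasDerivAt (fun s => (t - s) * deriv f s + f s)
      ((t - s) * deriv (deriv f) s) s := by
    intro s
    have h1 : HasDerivAt (fun s : ℝ => t - s) (-1) s := by
      simpa using (hasDerivAt_id s).const_sub t
    have h2 := (h1.mul (hd2 s)).add (hd1 s)
    exact h2.congr_deriv (by ring)
  have := intervalIntegral.integral_eq_sub_of_hasDerivAt (f := fun s => (t - s) * deriv f s + f s)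
    (f' := fun s => (t - s) * deriv (deriv f) s) (fun s _ => hF s)
    (((continuous_const.sub continuous_id).mul hcont).intervalIntegrable x t)
  rw [this]; ring

lemma Rbound (h : ℝ → ℝ) (hc : Continuous h) (L x t c : ℝ)
    (hx : x ∈ Set.Icc (0:ℝ) L) (ht : t ∈ Set.Icc (0:ℝ) L) (habs : |t - x| ≤ c) :
    (∫ s in x..t, (t - s) * h s) ^ 2 ≤ c ^ 3 / 3 * ∫ s in (0:ℝ)..L, h s ^ 2 := by
  obtain ⟨hx0, hxL⟩ := hx
  obtain ⟨ht0, htL⟩ := ht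
  have hcge : 0 ≤ c := le_trans (abs_nonneg _) habs
  have hQ0 : 0 ≤ ∫ s in (0:ℝ)..L, h s ^ 2 :=
    intervalIntegral.integral_nonneg (le_trans hx0 hxL) (fun s _ => sq_nonneg _)
  have key : ∀ p q : ℝ, (∫ s in p..q, (t - s) ^ 2) = ((t - p) ^ 3 - (t - q) ^ 3) / 3 := by
    intro p q
    have e : ∀ s : ℝ, (t - s) ^ 2 = s ^ 2 - (2 * t) * s + t ^ 2 := by intro s; ring
    simp_rw [e]
    rw [intervalIntegral.integral_add, intervalIntegral.integral_sub,
      integral_pow, intervalIntegral.integral_const_mul,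
      integral_id, intervalIntegral.integral_const]
    · push_cast [smul_eq_mul]; ring
    · exact (continuous_pow 2).intervalIntegrable p q
    · exact (continuous_const.mul continuous_id).intervalIntegrable p q
    · exact ((continuous_pow 2).sub (continuous_const.mul continuous_id)).intervalIntegrable p q
    · exact continuous_const.intervalIntegrable p q
  have hsub : ∀ p q : ℝ, 0 ≤ p → p ≤ q → q ≤ L →
      (∫ s in p..q, h s ^ 2) ≤ ∫ s in (0:ℝ)..L, h s ^ 2 := by
    intro p q h1 h2 h3
    exact intervalIntegral.integral_mono_interval h1 h2 h3
      (Filter.Eventually.of_forall (fun s => sq_nonneg _))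
      ((hc.pow 2).intervalIntegrable 0 L)
  rcases le_total x t with hxt | htx
  · have hcs := cs_int (fun s => t - s) h (continuous_const.sub continuous_id) hc x t hxt
    have h1 : (∫ s in x..t, (t - s) ^ 2) = (t - x) ^ 3 / 3 := by rw [key]; ring
    have h2 := hsub x t hx0 hxt htL
    have hc0 : 0 ≤ t - x := by linarith
    have hc3 : (t - x) ^ 3 ≤ c ^ 3 := by
      apply pow_le_pow_left₀ hc0; rw [abs_of_nonneg hc0] at habs; exact habs
    calc (∫ s in x..t, (t - s) * h s) ^ 2
        ≤ (∫ s in x..t, (t - s) ^ 2) * ∫ s in x..t, h s ^ 2 := hcs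
      _ ≤ c ^ 3 / 3 * ∫ s in (0:ℝ)..L, h s ^ 2 := by
          rw [h1]
          apply mul_le_mul (by linarith) h2
            (intervalIntegral.integral_nonneg hxt (fun s _ => sq_nonneg _))
            (div_nonneg (pow_nonneg hcge 3) (by norm_num))
  · have hcs := cs_int (fun s => t - s) h (continuous_const.sub continuous_id) hc t x htx
    have h1 : (∫ s in t..x, (t - s) ^ 2) = (x - t) ^ 3 / 3 := by rw [key]; ring
    have h2 := hsub t x ht0 htx hxL
    have hc0 : 0 ≤ x - t := by linarith
    have hc3 : (x - t) ^ 3 ≤ c ^ 3 := by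
      apply pow_le_pow_left₀ hc0; rw [abs_sub_comm, abs_of_nonneg hc0] at habs; exact habs
    have hsymm : (∫ s in x..t, (t - s) * h s) = -∫ s in t..x, (t - s) * h s :=
      intervalIntegral.integral_symm t x
    rw [hsymm, neg_sq]
    calc (∫ s in t..x, (t - s) * h s) ^ 2
        ≤ (∫ s in t..x, (t - s) ^ 2) * ∫ s in t..x, h s ^ 2 := hcs
      _ ≤ c ^ 3 / 3 * ∫ s in (0:ℝ)..L, h s ^ 2 := by
          rw [h1]
          apply mul_le_mul (by linarith) h2
            (intervalIntegral.integral_nonneg htx (fun s _ => sq_nonneg _))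
            (div_nonneg (pow_nonneg hcge 3) (by norm_num))

set_option maxHeartbeats 1000000 in
theorem stmt_1 (L : ℝ) (hL : 0 < L) (f : ℝ → ℝ) (hf : ContDiff ℝ 2 f) :
    (∫ x in (0:ℝ)..L, (deriv f x) ^ 2) ≤
      (162 / L ^ 2) * (∫ t in (0:ℝ)..L, (f t) ^ 2) +
        2 * L ^ 2 * ∫ t in (0:ℝ)..L, (deriv (deriv f) t) ^ 2 := by
  have hf2 : ContDiff ℝ ((1:WithTop ℕ∞) + 1) f := by
    have e : ((1:WithTop ℕ∞) + 1) = 2 := by norm_num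
    rw [e]; exact hf
  obtain ⟨hfd, -, hg1⟩ := contDiff_succ_iff_deriv.mp hf2
  have hfc : Continuous f := hfd.continuous
  have hgd : Differentiable ℝ (deriv f) := hg1.differentiable one_ne_zero
  have hgc : Continuous (deriv f) := hgd.continuous
  have hhc : Continuous (deriv (deriv f)) := hg1.continuous_deriv le_rfl
  have hd1 : ∀ s, HasDerivAt f (deriv f s) s := fun s => (hfd s).hasDerivAt
  have hd2 : ∀ s, HasDerivAt (deriv f) (deriv (deriv f) s) s := fun s => (hgd s).hasDerivAt
  set g := deriv f with hgdef
  set h := deriv (deriv f) with hhdef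
  set Q := ∫ t in (0:ℝ)..L, h t ^ 2 with hQdef
  set P := ∫ t in (0:ℝ)..L, f t ^ 2 with hPdef
  have hQ0 : 0 ≤ Q := intervalIntegral.integral_nonneg hL.le (fun s _ => sq_nonneg _)
  have hP0 : 0 ≤ P := intervalIntegral.integral_nonneg hL.le (fun s _ => sq_nonneg _)
  set A1 := ∫ t in (0:ℝ)..(L/4), f t with hA1def
  set A2 := ∫ t in (3*L/4)..L, f t with hA2def
  set A := A2 - A1 with hAdef
  have hA1sq : A1 ^ 2 ≤ (L/4) * P := by
    have := sq_integral_le f hfc L 0 (L/4) le_rfl (by linarith) (by linarith)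
    simpa using this
  have hA2sq : A2 ^ 2 ≤ (L/4) * P := by
    have := sq_integral_le f hfc L (3*L/4) L (by linarith) (by linarith) le_rfl
    have e : L - 3*L/4 = L/4 := by ring
    rwa [e] at this
  have hAsq : A ^ 2 ≤ L * P := by
    rw [hAdef]; nlinarith [sq_nonneg (A1 + A2), hA1sq, hA2sq]
  -- pointwise bound
  have key : ∀ x ∈ Set.Icc (0:ℝ) L, g x ^ 2 ≤
      (4*A^2 + L^2*Q/18 * ((x + L/4)^3 + (L + L/4 - x)^3)) / (9*L^4/256) := by
    intro x hx
    obtain ⟨hx0, hxL⟩ := hx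
    have hint : ∀ a b : ℝ, (∫ t in a..b, (f t - f x - (t - x) * g x))
        = (∫ t in a..b, f t) - (b - a) * f x - ((b^2 - a^2)/2 - x*(b - a)) * g x := by
      intro a b
      rw [intervalIntegral.integral_sub, intervalIntegral.integral_sub,
        intervalIntegral.integral_const, intervalIntegral.integral_mul_const,
        intervalIntegral.integral_sub, integral_id, intervalIntegral.integral_const]
      · push_cast [smul_eq_mul]; ring
      · exact continuous_id.intervalIntegrable a b
      · exact continuous_const.intervalIntegrable a b
      · exact hfc.intervalIntegrable a b
      · exact continuous_const.intervalIntegrable a b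
      · exact (hfc.sub continuous_const).intervalIntegrable a b
      · exact ((continuous_id.sub continuous_const).mul continuous_const).intervalIntegrable a b
    set I1 := ∫ t in (0:ℝ)..(L/4), (f t - f x - (t - x) * g x) with hI1def
    set I2 := ∫ t in (3*L/4)..L, (f t - f x - (t - x) * g x) with hI2def
    have hid : 3*L^2/16 * g x = A + (I1 - I2) := by
      rw [hI1def, hI2def, hint, hint, hAdef]; ring
    have hb1 : |I1| ≤ Real.sqrt ((x + L/4)^3/3 * Q) * (L/4) := by
      have hptw : ∀ t ∈ Set.uIoc (0:ℝ) (L/4), ‖f t - f x - (t - x) * g x‖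
          ≤ Real.sqrt ((x + L/4)^3/3 * Q) := by
        intro t ht
        rw [Set.uIoc_of_le (by linarith : (0:ℝ) ≤ L/4)] at ht
        obtain ⟨ht0, htb⟩ := ht
        rw [Real.norm_eq_abs, ← taylor_id f hd1 hd2 hhc x t]
        have hR := Rbound h hhc L x t (x + L/4) ⟨hx0, hxL⟩ ⟨ht0.le, by linarith⟩
          (abs_le.mpr ⟨by linarith, by linarith⟩)
        calc |∫ s in x..t, (t - s) * h s|
            = Real.sqrt ((∫ s in x..t, (t - s) * h s)^2) := (Real.sqrt_sq_eq_abs _).symm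
          _ ≤ Real.sqrt ((x + L/4)^3/3 * Q) := Real.sqrt_le_sqrt hR
      have := intervalIntegral.norm_integral_le_of_norm_le_const hptw
      rw [Real.norm_eq_abs] at this
      have e : |L/4 - 0| = L/4 := by rw [abs_of_nonneg (by linarith)]; ring
      rwa [e] at this
    have hb2 : |I2| ≤ Real.sqrt ((L + L/4 - x)^3/3 * Q) * (L/4) := by
      have hptw : ∀ t ∈ Set.uIoc (3*L/4) L, ‖f t - f x - (t - x) * g x‖
          ≤ Real.sqrt ((L + L/4 - x)^3/3 * Q) := by
        intro t ht
        rw [Set.uIoc_of_le (by linarith : 3*L/4 ≤ L)] at ht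
        obtain ⟨ht0, htb⟩ := ht
        rw [Real.norm_eq_abs, ← taylor_id f hd1 hd2 hhc x t]
        have hR := Rbound h hhc L x t (L + L/4 - x) ⟨hx0, hxL⟩ ⟨by linarith, htb⟩
          (abs_le.mpr ⟨by linarith, by linarith⟩)
        calc |∫ s in x..t, (t - s) * h s|
            = Real.sqrt ((∫ s in x..t, (t - s) * h s)^2) := (Real.sqrt_sq_eq_abs _).symm
          _ ≤ Real.sqrt ((L + L/4 - x)^3/3 * Q) := Real.sqrt_le_sqrt hR
      have := intervalIntegral.norm_integral_le_of_norm_le_const hptw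
      rw [Real.norm_eq_abs] at this
      have e : |L - 3*L/4| = L/4 := by rw [abs_of_nonneg (by linarith)]; ring
      rwa [e] at this
    have hsq1 : (Real.sqrt ((x + L/4)^3/3 * Q))^2 = (x + L/4)^3/3 * Q :=
      Real.sq_sqrt (mul_nonneg (div_nonneg (pow_nonneg (by linarith) 3) (by norm_num)) hQ0)
    have hsq2 : (Real.sqrt ((L + L/4 - x)^3/3 * Q))^2 = (L + L/4 - x)^3/3 * Q :=
      Real.sq_sqrt (mul_nonneg (div_nonneg (pow_nonneg (by linarith) 3) (by norm_num)) hQ0)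
    have hs1 : I1^2 ≤ (L/4)^2 * ((x + L/4)^3/3 * Q) := by
      have h1 : I1^2 ≤ (Real.sqrt ((x + L/4)^3/3 * Q) * (L/4))^2 := by
        rw [← sq_abs I1]
        exact pow_le_pow_left₀ (abs_nonneg _) hb1 2
      nlinarith [h1, hsq1]
    have hs2 : I2^2 ≤ (L/4)^2 * ((L + L/4 - x)^3/3 * Q) := by
      have h1 : I2^2 ≤ (Real.sqrt ((L + L/4 - x)^3/3 * Q) * (L/4))^2 := by
        rw [← sq_abs I2]
        exact pow_le_pow_left₀ (abs_nonneg _) hb2 2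
      nlinarith [h1, hsq2]
    rw [le_div_iff₀ (by positivity : (0:ℝ) < 9*L^4/256)]
    clear_value A I1 I2 Q
    have hdd : (3*L^2/16 * g x)^2 ≤ 4*A^2 + (4/3)*(I1 - I2)^2 := by
      rw [hid]; nlinarith [sq_nonneg (3*A - (I1 - I2))]
    have hdd2 : (I1 - I2)^2 ≤ 2*I1^2 + 2*I2^2 := by nlinarith [sq_nonneg (I1 + I2)]
    have hexp : (3*L^2/16 * g x)^2 = g x^2 * (9*L^4/256) := by ring
    have e2 : L^2*Q/18*((x + L/4)^3 + (L + L/4 - x)^3)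
        = (8/3)*((L/4)^2*((x + L/4)^3/3*Q)) + (8/3)*((L/4)^2*((L + L/4 - x)^3/3*Q)) := by ring
    linarith [hdd, hdd2, hs1, hs2, hexp, e2]
  -- integrate
  have hgint : IntervalIntegrable (fun x => g x ^ 2) volume 0 L :=
    (hgc.pow 2).intervalIntegrable 0 L
  have hRHSc : Continuous (fun x : ℝ =>
      (4*A^2 + L^2*Q/18 * ((x + L/4)^3 + (L + L/4 - x)^3)) / (9*L^4/256)) := by
    apply Continuous.div_const
    exact continuous_const.add (continuous_const.mul
      (((continuous_id.add continuous_const).pow 3).add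
        ((continuous_const.sub continuous_id).pow 3)))
  have hmono := intervalIntegral.integral_mono_on hL.le hgint
    (hRHSc.intervalIntegrable 0 L) key
  have hval : (∫ x in (0:ℝ)..L,
      (4*A^2 + L^2*Q/18 * ((x + L/4)^3 + (L + L/4 - x)^3)) / (9*L^4/256))
      = (4*A^2*L + 13/192*L^6*Q) / (9*L^4/256) := by
    rw [intervalIntegral.integral_div]
    congr 1
    have e : ∀ x : ℝ, 4*A^2 + L^2*Q/18 * ((x + L/4)^3 + (L + L/4 - x)^3)
        = (4*A^2 + L^2*Q/18*(63*L^3/32)) + (-(L^2*Q/18)*(9*L^2/2))*x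
          + ((L^2*Q/18)*(9*L/2))*x^2 := by intro x; ring
    simp_rw [e]
    rw [intervalIntegral.integral_add, intervalIntegral.integral_add,
      intervalIntegral.integral_const, intervalIntegral.integral_const_mul,
      intervalIntegral.integral_const_mul, integral_id, integral_pow]
    · push_cast [smul_eq_mul]; ring
    · exact continuous_const.intervalIntegrable 0 L
    · exact (continuous_const.mul continuous_id).intervalIntegrable 0 L
    · exact (continuous_const.add (continuous_const.mul continuous_id)).intervalIntegrable 0 L
    · exact (continuous_const.mul (continuous_pow 2)).intervalIntegrable 0 L
  have hfinal : (4*A^2*L + 13/192*L^6*Q) / (9*L^4/256) ≤ 162 / L^2 * P + 2*L^2*Q := by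
    rw [div_le_iff₀ (by positivity : (0:ℝ) < 9*L^4/256)]
    have e162 : (162 / L^2 * P + 2*L^2*Q) * (9*L^4/256)
        = 729/128 * P * L^2 + 9/128 * L^6 * Q := by
      field_simp; ring
    rw [e162]
    clear_value A P Q
    have h1 : A^2 * L ≤ P * L^2 := by nlinarith [hAsq, hL]
    nlinarith [h1, mul_nonneg hP0 (sq_nonneg L), mul_nonneg (pow_nonneg hL.le 6) hQ0]
  calc (∫ x in (0:ℝ)..L, g x ^ 2)
      ≤ ∫ x in (0:ℝ)..L,
        (4*A^2 + L^2*Q/18 * ((x + L/4)^3 + (L + L/4 - x)^3)) / (9*L^4/256) := hmono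
    _ = (4*A^2*L + 13/192*L^6*Q) / (9*L^4/256) := hval
    _ ≤ 162 / L^2 * P + 2*L^2*Q := hfinal
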